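/- Compatibility of geodesics under reparametrization: for positive definite X, Y and s, u, t in [0,1], one has (X #_s Y) #_t (X #_u Y) = X #_{(1−t)s + tu} Y, where X #_t Y := X^{1/2}(X^{-1/2} Y X^{-1/2})^t X^{1/2}. -/

import Mathlib

open Matrix

/-- Real power of a matrix via the spectral decomposition (defined for Hermitian input). -/
noncomputable def mpow {d : ℕ} (A : Matrix (Fin d) (Fin d) ℝ) (t : ℝ) : Matrix (Fin d) (Fin d) ℝ :=
  if hA : A.IsHermitian then
    (hA.eigenvectorUnitary : Matrix (Fin d) (Fin d) ℝ) *
      Matrix.diagonal (fun i => hA.eigenvalues i ^ t) *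
      star (hA.eigenvectorUnitary : Matrix (Fin d) (Fin d) ℝ)
  else A

/-- The geodesic `X #ₜ Y = X^{1/2} (X^{-1/2} Y X^{-1/2})^t X^{1/2}`. -/
noncomputable def geo {d : ℕ} (X Y : Matrix (Fin d) (Fin d) ℝ) (t : ℝ) : Matrix (Fin d) (Fin d) ℝ :=
  mpow X (1/2) * mpow (mpow X (-(1/2)) * Y * mpow X (-(1/2))) t * mpow X (1/2)

/-- The matrix geometric mean `X # Y`. -/
noncomputable def gmean {d : ℕ} (X Y : Matrix (Fin d) (Fin d) ℝ) : Matrix (Fin d) (Fin d) ℝ :=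
  geo X Y (1/2)

section Helpers

open Polynomial

variable {n : ℕ}

private lemma mconj_mul_mconj {V A B : Matrix (Fin n) (Fin n) ℝ} (h2 : star V * V = 1) :
    (V * A * star V) * (V * B * star V) = V * (A * B) * star V := by
  simp only [mul_assoc]
  rw [← mul_assoc (star V) V, h2, one_mul]

private lemma mconj_pow {V D : Matrix (Fin n) (Fin n) ℝ} (h1 : V * star V = 1)
    (h2 : star V * V = 1) (k : ℕ) : (V * D * star V) ^ k = V * D ^ k * star V := by
  induction k with
  | zero => simpa using h1.symm
  | succ k ih => rw [pow_succ, ih, mconj_mul_mconj h2, pow_succ]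

private lemma aeval_conj {V : Matrix (Fin n) (Fin n) ℝ} (h1 : V * star V = 1)
    (h2 : star V * V = 1) (D : Matrix (Fin n) (Fin n) ℝ) (p : ℝ[X]) :
    aeval (V * D * star V) p = V * aeval D p * star V := by
  induction p using Polynomial.induction_on' with
  | add p q hp hq => rw [map_add, hp, hq, map_add, mul_add, add_mul]
  | monomial k a =>
      simp only [aeval_monomial, mconj_pow h1 h2, Algebra.algebraMap_eq_smul_one,
        smul_mul_assoc, one_mul, mul_smul_comm]

private lemma aeval_diagonal (d : Fin n → ℝ) (p : ℝ[X]) :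
    aeval (diagonal d) p = diagonal (fun i => p.eval (d i)) := by
  induction p using Polynomial.induction_on' with
  | add p q hp hq =>
      rw [map_add, hp, hq, diagonal_add]
      simp only [eval_add]
  | monomial k a =>
      rw [aeval_monomial, diagonal_pow, Algebra.algebraMap_eq_smul_one, smul_mul_assoc,
        one_mul]
      ext i j
      by_cases h : i = j <;>
        simp [eval_monomial, Matrix.diagonal_apply, h, Pi.pow_apply, Matrix.smul_apply]

lemma isUnit_of_unitary {V : Matrix (Fin n) (Fin n) ℝ}
    (hV : V ∈ Matrix.unitaryGroup (Fin n) ℝ) : IsUnit V := by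
  have h1 : V * star V = 1 := mem_unitaryGroup_iff.mp hV
  have h2 : star V * V = 1 := mem_unitaryGroup_iff'.mp hV
  exact ⟨⟨V, star V, h1, h2⟩, rfl⟩

lemma isUnit_of_inv {A B : Matrix (Fin n) (Fin n) ℝ} (h1 : A * B = 1) (h2 : B * A = 1) :
    IsUnit A := ⟨⟨A, B, h1, h2⟩, rfl⟩

lemma mpow_eq {A : Matrix (Fin n) (Fin n) ℝ} (hA : A.IsHermitian) (t : ℝ) :
    mpow A t = (hA.eigenvectorUnitary : Matrix (Fin n) (Fin n) ℝ) *
      diagonal (fun i => hA.eigenvalues i ^ t) *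
      star (hA.eigenvectorUnitary : Matrix (Fin n) (Fin n) ℝ) := by
  rw [mpow, dif_pos hA]

lemma spectral' {A : Matrix (Fin n) (Fin n) ℝ} (hA : A.IsHermitian) :
    A = (hA.eigenvectorUnitary : Matrix (Fin n) (Fin n) ℝ) * diagonal hA.eigenvalues *
      star (hA.eigenvectorUnitary : Matrix (Fin n) (Fin n) ℝ) := by
  conv_lhs => rw [hA.spectral_theorem]
  rw [RCLike.ofReal_real_eq_id, Function.id_comp, Unitary.conjStarAlgAut_apply]

lemma mpow_conj_diag {V : Matrix (Fin n) (Fin n) ℝ} (hV : V ∈ Matrix.unitaryGroup (Fin n) ℝ)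
    (d : Fin n → ℝ) (t : ℝ) :
    mpow (V * diagonal d * star V) t = V * diagonal (fun i => d i ^ t) * star V := by
  have h1 : V * star V = 1 := mem_unitaryGroup_iff.mp hV
  have h2 : star V * V = 1 := mem_unitaryGroup_iff'.mp hV
  have hA : (V * diagonal d * star V).IsHermitian := by
    rw [star_eq_conjTranspose]
    exact isHermitian_mul_mul_conjTranspose V (isHermitian_diagonal d)
  have hU1 : (hA.eigenvectorUnitary : Matrix (Fin n) (Fin n) ℝ) *
      star (hA.eigenvectorUnitary : Matrix (Fin n) (Fin n) ℝ) = 1 :=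
    mem_unitaryGroup_iff.mp hA.eigenvectorUnitary.2
  have hU2 : star (hA.eigenvectorUnitary : Matrix (Fin n) (Fin n) ℝ) *
      (hA.eigenvectorUnitary : Matrix (Fin n) (Fin n) ℝ) = 1 :=
    mem_unitaryGroup_iff'.mp hA.eigenvectorUnitary.2
  classical
  set S : Finset ℝ := Finset.univ.image d ∪ Finset.univ.image hA.eigenvalues with hS
  have hinj : Set.InjOn (id : ℝ → ℝ) S := Function.injective_id.injOn
  set p : ℝ[X] := Lagrange.interpolate S id (fun x => x ^ t) with hp
  have hev : ∀ x ∈ S, p.eval x = x ^ t := fun x hx =>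
    Lagrange.eval_interpolate_at_node _ hinj hx
  have key1 : aeval (V * diagonal d * star V) p = mpow (V * diagonal d * star V) t := by
    conv_lhs => rw [spectral' hA]
    rw [aeval_conj hU1 hU2, aeval_diagonal, mpow_eq hA]
    have he : (fun i => p.eval (hA.eigenvalues i)) = fun i => hA.eigenvalues i ^ t :=
      funext fun i => hev _ (Finset.mem_union_right _ (Finset.mem_image_of_mem _ (Finset.mem_univ i)))
    rw [he]
  have key2 : aeval (V * diagonal d * star V) p = V * diagonal (fun i => d i ^ t) * star V := by
    rw [aeval_conj h1 h2, aeval_diagonal]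
    have he : (fun i => p.eval (d i)) = fun i => d i ^ t :=
      funext fun i => hev _ (Finset.mem_union_left _ (Finset.mem_image_of_mem _ (Finset.mem_univ i)))
    rw [he]
  rw [← key1, key2]

lemma posDef_conj {P C : Matrix (Fin n) (Fin n) ℝ} (hP : P.PosDef) (hC : IsUnit C) :
    (C * P * star C).PosDef := by
  have key : ((star C)ᴴ * P * star C).PosDef := by
    refine PosDef.of_dotProduct_mulVec_pos (isHermitian_conjTranspose_mul_mul _ hP.1) fun x hx => ?_
    have hinj : Function.Injective (star C).mulVec :=
      mulVec_injective_iff_isUnit.mpr hC.star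
    have hx' : star C *ᵥ x ≠ 0 := fun h => hx (hinj (by simpa using h))
    simpa only [star_mulVec, dotProduct_mulVec, vecMul_vecMul] using hP.dotProduct_mulVec_pos hx'
  simpa only [star_eq_conjTranspose, conjTranspose_conjTranspose] using key

lemma mpow_isHermitian {A : Matrix (Fin n) (Fin n) ℝ} (hA : A.IsHermitian) (t : ℝ) :
    (mpow A t).IsHermitian := by
  rw [mpow_eq hA, star_eq_conjTranspose]
  exact isHermitian_mul_mul_conjTranspose _ (isHermitian_diagonal _)

lemma star_mpow {A : Matrix (Fin n) (Fin n) ℝ} (hA : A.IsHermitian) (t : ℝ) :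
    star (mpow A t) = mpow A t := by
  rw [star_eq_conjTranspose]
  exact mpow_isHermitian hA t

lemma mpow_posDef {X : Matrix (Fin n) (Fin n) ℝ} (hX : X.PosDef) (t : ℝ) :
    (mpow X t).PosDef := by
  rw [mpow_eq hX.1]
  have hd : (diagonal fun i => hX.1.eigenvalues i ^ t).PosDef :=
    PosDef.diagonal fun i => Real.rpow_pos_of_pos (hX.eigenvalues_pos i) t
  exact posDef_conj hd (isUnit_of_unitary hX.1.eigenvectorUnitary.2)

lemma mpow_mul_mpow {X : Matrix (Fin n) (Fin n) ℝ} (hX : X.PosDef) (a b : ℝ) :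
    mpow X a * mpow X b = mpow X (a + b) := by
  rw [mpow_eq hX.1 a, mpow_eq hX.1 b, mpow_eq hX.1 (a + b),
    mconj_mul_mconj (mem_unitaryGroup_iff'.mp hX.1.eigenvectorUnitary.2), diagonal_mul_diagonal]
  have he : (fun i => hX.1.eigenvalues i ^ a * hX.1.eigenvalues i ^ b) =
      fun i => hX.1.eigenvalues i ^ (a + b) :=
    funext fun i => (Real.rpow_add (hX.eigenvalues_pos i) a b).symm
  rw [he]

lemma mpow_zero {A : Matrix (Fin n) (Fin n) ℝ} (hA : A.IsHermitian) : mpow A 0 = 1 := by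
  rw [mpow_eq hA]
  simp only [Real.rpow_zero, diagonal_one, mul_one]
  exact mem_unitaryGroup_iff.mp hA.eigenvectorUnitary.2

lemma mpow_one {A : Matrix (Fin n) (Fin n) ℝ} (hA : A.IsHermitian) : mpow A 1 = A := by
  rw [mpow_eq hA]
  simp only [Real.rpow_one]
  exact (spectral' hA).symm

lemma mpow_mpow {X : Matrix (Fin n) (Fin n) ℝ} (hX : X.PosDef) (a b : ℝ) :
    mpow (mpow X a) b = mpow X (a * b) := by
  rw [mpow_eq hX.1 a, mpow_conj_diag hX.1.eigenvectorUnitary.2, mpow_eq hX.1]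
  have he : (fun i => (hX.1.eigenvalues i ^ a) ^ b) = fun i => hX.1.eigenvalues i ^ (a * b) :=
    funext fun i => (Real.rpow_mul (hX.eigenvalues_pos i).le a b).symm
  rw [he]

lemma mpow_unitary_conj {A : Matrix (Fin n) (Fin n) ℝ} (hA : A.IsHermitian)
    {W : Matrix (Fin n) (Fin n) ℝ} (hW : W ∈ Matrix.unitaryGroup (Fin n) ℝ) (t : ℝ) :
    mpow (W * A * star W) t = W * mpow A t * star W := by
  have hWU : W * (hA.eigenvectorUnitary : Matrix (Fin n) (Fin n) ℝ) ∈
      Matrix.unitaryGroup (Fin n) ℝ := mul_mem hW hA.eigenvectorUnitary.2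
  have h : W * A * star W =
      (W * (hA.eigenvectorUnitary : Matrix (Fin n) (Fin n) ℝ)) * diagonal hA.eigenvalues *
        star (W * (hA.eigenvectorUnitary : Matrix (Fin n) (Fin n) ℝ)) := by
    conv_lhs => rw [spectral' hA]
    rw [Matrix.star_mul]
    simp only [mul_assoc]
  rw [h, mpow_conj_diag hWU, mpow_eq hA, Matrix.star_mul]
  simp only [mul_assoc]

lemma geo_conj {X Y C : Matrix (Fin n) (Fin n) ℝ} (hX : X.PosDef) (hY : Y.PosDef)
    (hC : IsUnit C) (t : ℝ) :
    geo (C * X * star C) (C * Y * star C) t = C * geo X Y t * star C := by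
  unfold geo
  set R := mpow X (1/2) with hR
  set Ri := mpow X (-(1/2)) with hRi
  set Z := C * X * star C with hZ
  have hZpd : Z.PosDef := posDef_conj hX hC
  set S := mpow Z (1/2) with hS
  set Si := mpow Z (-(1/2)) with hSi
  have hRRi : R * Ri = 1 := by rw [hR, hRi, mpow_mul_mpow hX]; norm_num; exact mpow_zero hX.1
  have hRiR : Ri * R = 1 := by rw [hR, hRi, mpow_mul_mpow hX]; norm_num; exact mpow_zero hX.1
  have hRR : R * R = X := by
    rw [hR, mpow_mul_mpow hX]; norm_num; exact mpow_one hX.1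
  have hSSi : S * Si = 1 := by rw [hS, hSi, mpow_mul_mpow hZpd]; norm_num; exact mpow_zero hZpd.1
  have hSiS : Si * S = 1 := by rw [hS, hSi, mpow_mul_mpow hZpd]; norm_num; exact mpow_zero hZpd.1
  have hstarR : star R = R := star_mpow hX.1 _
  have hstarRi : star Ri = Ri := star_mpow hX.1 _
  have hstarSi : star Si = Si := star_mpow hZpd.1 _
  set W := Si * C * R with hW
  have hstarW : star W = R * star C * Si := by
    rw [hW, Matrix.star_mul, Matrix.star_mul, hstarR, hstarSi, mul_assoc]
  have hSiZSi : Si * Z * Si = 1 := by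
    calc Si * Z * Si = mpow Z (-(1/2)) * mpow Z 1 * mpow Z (-(1/2)) := by
          rw [hSi, mpow_one hZpd.1]
      _ = mpow Z (-(1/2) + 1 + -(1/2)) := by rw [mpow_mul_mpow hZpd, mpow_mul_mpow hZpd]
      _ = 1 := by norm_num; exact mpow_zero hZpd.1
  have hWmem : W ∈ Matrix.unitaryGroup (Fin n) ℝ := by
    rw [mem_unitaryGroup_iff, hstarW, hW]
    calc Si * C * R * (R * star C * Si)
        = Si * (C * (R * R) * star C) * Si := by simp only [mul_assoc]
      _ = Si * Z * Si := by rw [hRR, hZ, mul_assoc C X (star C)]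
      _ = 1 := hSiZSi
  have hM : (Ri * Y * Ri).PosDef := by
    have : IsUnit Ri := isUnit_of_inv hRiR hRRi
    have := posDef_conj hY this
    rwa [hstarRi] at this
  have key : Si * (C * Y * star C) * Si = W * (Ri * Y * Ri) * star W := by
    rw [hstarW, hW]
    symm
    calc Si * C * R * (Ri * Y * Ri) * (R * star C * Si)
        = Si * C * ((R * Ri) * Y * (Ri * R)) * star C * Si := by simp only [mul_assoc]
      _ = Si * (C * Y * star C) * Si := by
          rw [hRRi, hRiR, one_mul, mul_one]; simp only [mul_assoc]
  rw [key, mpow_unitary_conj hM.1 hWmem]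
  have hSW : S * W = C * R := by
    rw [hW, ← mul_assoc, ← mul_assoc, hSSi, one_mul]
  have hWS : star W * S = R * star C := by
    rw [hstarW, mul_assoc, hSiS, mul_one]
  calc S * (W * mpow (Ri * Y * Ri) t * star W) * S
      = (S * W) * mpow (Ri * Y * Ri) t * (star W * S) := by simp only [mul_assoc]
    _ = C * R * mpow (Ri * Y * Ri) t * (R * star C) := by rw [hSW, hWS]
    _ = C * (R * mpow (Ri * Y * Ri) t * R) * star C := by simp only [mul_assoc]

end Helpers

set_option maxHeartbeats 2000000 in
theorem stmt18 {n : ℕ} (X Y : Matrix (Fin n) (Fin n) ℝ)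
    (hX : X.PosDef) (hY : Y.PosDef) (s u t : ℝ)
    (hs : s ∈ Set.Icc (0:ℝ) 1) (hu : u ∈ Set.Icc (0:ℝ) 1) (ht : t ∈ Set.Icc (0:ℝ) 1) :
    geo (geo X Y s) (geo X Y u) t = geo X Y ((1 - t) * s + t * u) := by
  have hRiR : mpow X (-(1/2)) * mpow X (1/2) = 1 := by
    rw [mpow_mul_mpow hX]; norm_num; exact mpow_zero hX.1
  have hRRi : mpow X (1/2) * mpow X (-(1/2)) = 1 := by
    rw [mpow_mul_mpow hX]; norm_num; exact mpow_zero hX.1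
  have hstarRi : star (mpow X (-(1/2))) = mpow X (-(1/2)) := star_mpow hX.1 _
  have hstarR : star (mpow X (1/2)) = mpow X (1/2) := star_mpow hX.1 _
  have hMpd : (mpow X (-(1/2)) * Y * mpow X (-(1/2))).PosDef := by
    have := posDef_conj hY (isUnit_of_inv hRiR hRRi)
    rwa [hstarRi] at this
  have hRunit : IsUnit (mpow X (1/2)) := isUnit_of_inv hRRi hRiR
  have hgeo : ∀ a : ℝ, geo X Y a = mpow X (1/2) *
      mpow (mpow X (-(1/2)) * Y * mpow X (-(1/2))) a * star (mpow X (1/2)) := by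
    intro a
    unfold geo
    rw [hstarR]
  have hmid : geo (mpow (mpow X (-(1/2)) * Y * mpow X (-(1/2))) s)
      (mpow (mpow X (-(1/2)) * Y * mpow X (-(1/2))) u) t =
      mpow (mpow X (-(1/2)) * Y * mpow X (-(1/2))) ((1 - t) * s + t * u) := by
    unfold geo
    rw [mpow_mpow hMpd s (1/2), mpow_mpow hMpd s (-(1/2)), mpow_mul_mpow hMpd,
      mpow_mul_mpow hMpd, mpow_mpow hMpd, mpow_mul_mpow hMpd, mpow_mul_mpow hMpd]
    congr 1
    ring
  rw [hgeo s, hgeo u,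
    geo_conj (mpow_posDef hMpd s) (mpow_posDef hMpd u) hRunit, hmid, hgeo]
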